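/- Let σ(x) = 1/(1+exp(-x)) and ψ(x) = tanh(x), and define HTAF(x | α₀, α₁) = σ(α₁ ψ(α₀ x)). For any ε ∈ (0, 1/2), if α₁ > log((1-ε)/ε) and α₀ ≥ (1/(2ε)) · log( (α₁ + log((1-ε)/ε)) / (α₁ - log((1-ε)/ε)) ), then for all x ≥ ε, |1 - HTAF(x | α₀, α₁)| ≤ ε. -/

import Mathlib

noncomputable def sigmoid (x : ℝ) : ℝ := 1 / (1 + Real.exp (-x))

noncomputable def HTAF (α₀ α₁ x : ℝ) : ℝ := sigmoid (α₁ * Real.tanh (α₀ * x))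

theorem stmt_0 (ε α₀ α₁ : ℝ) (hε : ε ∈ Set.Ioo (0:ℝ) (1/2))
    (hα₁ : α₁ > Real.log ((1 - ε) / ε))
    (hα₀ : α₀ ≥ (1 / (2 * ε)) *
      Real.log ((α₁ + Real.log ((1 - ε) / ε)) / (α₁ - Real.log ((1 - ε) / ε)))) :
    ∀ x : ℝ, x ≥ ε → |1 - HTAF α₀ α₁ x| ≤ ε := by
  obtain ⟨hε0, hε2⟩ := hε
  set L := Real.log ((1 - ε) / ε) with hLdef
  have h1ε : (0:ℝ) < 1 - ε := by linarith
  have hratio : 1 < (1 - ε) / ε := by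
    rw [lt_div_iff₀ hε0]; linarith
  have hL : 0 < L := Real.log_pos hratio
  have hα₁0 : 0 < α₁ := lt_trans hL hα₁
  have hden : 0 < α₁ - L := by linarith
  have hnum : 0 < α₁ + L := by linarith
  have hRpos : 0 < (α₁ + L) / (α₁ - L) := div_pos hnum hden
  have hR : (1:ℝ) ≤ (α₁ + L) / (α₁ - L) := by
    rw [le_div_iff₀ hden]; linarith
  have hlogR : 0 ≤ Real.log ((α₁ + L) / (α₁ - L)) := Real.log_nonneg hR
  have hα₀0 : 0 ≤ α₀ := le_trans (by positivity) hα₀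
  intro x hx
  have hy : (1/2) * Real.log ((α₁ + L) / (α₁ - L)) ≤ α₀ * x := by
    have h1 : (1/(2*ε)) * Real.log ((α₁ + L) / (α₁ - L)) * ε
        = (1/2) * Real.log ((α₁ + L) / (α₁ - L)) := by
      field_simp
    have h2 := mul_le_mul_of_nonneg_right hα₀ hε0.le
    have h3 := mul_le_mul_of_nonneg_left hx hα₀0
    rw [h1] at h2
    linarith
  set y := α₀ * x with hydef
  have hexp : (α₁ + L) / (α₁ - L) ≤ Real.exp y * Real.exp y := by
    calc (α₁ + L) / (α₁ - L) = Real.exp (Real.log ((α₁ + L) / (α₁ - L))) :=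
          (Real.exp_log hRpos).symm
      _ ≤ Real.exp (2 * y) := Real.exp_le_exp.mpr (by linarith)
      _ = Real.exp y * Real.exp y := by rw [two_mul, Real.exp_add]
  have ht : L ≤ α₁ * Real.tanh y := by
    rw [Real.tanh_eq_sinh_div_cosh, Real.sinh_eq, Real.cosh_eq]
    have hE : 0 < Real.exp y := Real.exp_pos _
    have hEn : Real.exp (-y) = (Real.exp y)⁻¹ := Real.exp_neg y
    rw [hEn]
    set E := Real.exp y with hEdef
    have hq : (E - E⁻¹)/2 / ((E + E⁻¹)/2) = (E*E - 1)/(E*E + 1) := by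
      field_simp
    rw [hq]
    have hE2 : 0 < E * E + 1 := by positivity
    rw [← mul_div_assoc, le_div_iff₀ hE2]
    rw [div_le_iff₀ hden] at hexp
    nlinarith
  -- final sigmoid step
  show |1 - sigmoid (α₁ * Real.tanh (α₀ * x))| ≤ ε
  unfold sigmoid
  set t := α₁ * Real.tanh y with htdef
  have hu : Real.exp (-t) ≤ ε / (1 - ε) := by
    have h1 : Real.exp (-t) ≤ Real.exp (-L) := Real.exp_le_exp.mpr (by linarith)
    have h2 : Real.exp (-L) = ε / (1 - ε) := by
      rw [Real.exp_neg, hLdef, Real.exp_log (by positivity : (0:ℝ) < (1-ε)/ε), inv_div]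
    linarith
  set u := Real.exp (-t) with hudef
  have hu0 : 0 < u := Real.exp_pos _
  have h1u : 0 < 1 + u := by linarith
  have habs : 1 - 1 / (1 + u) = u / (1 + u) := by field_simp; ring
  rw [abs_of_nonneg (by rw [habs]; positivity), habs, div_le_iff₀ h1u]
  have hcanc : ε / (1 - ε) * (1 - ε) = ε := by field_simp
  nlinarith [mul_le_mul_of_nonneg_right hu h1ε.le]
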